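/- For every n ∈ ℕ with n ≥ 1 and every m with n ≤ m ≤ 2^n − 1, there exists a finite semigroup S with exactly m elements such that H_L(S) = n and H_R(S) = H_J(S) = m (so in particular S is J-trivial, i.e. Green's relation J on S is equality). -/

import Mathlib

namespace GreenHeights

universe u

section Defs

variable {S : Type u} [Semigroup S]

/-- Green's preorder `≤_L`: `a ≤_L b` iff `a = s * b` for some `s ∈ S¹`
(i.e. `a = b` or `a = s * b` for some `s ∈ S`). -/
def leL (a b : S) : Prop := a = b ∨ ∃ s : S, a = s * b

/-- Green's preorder `≤_R`: `a ≤_R b` iff `a = b * s` for some `s ∈ S¹`. -/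
def leR (a b : S) : Prop := a = b ∨ ∃ s : S, a = b * s

/-- Green's preorder `≤_J`: `a ≤_J b` iff `a = s * b * t` for some `s, t ∈ S¹`. -/
def leJ (a b : S) : Prop :=
  a = b ∨ (∃ s : S, a = s * b) ∨ (∃ t : S, a = b * t) ∨ ∃ s t : S, a = s * b * t

/-- Green's preorder `≤_H`. -/
def leH (a b : S) : Prop := leL a b ∧ leR a b

/-- Green's relation `L`. -/
def eqvL (a b : S) : Prop := leL a b ∧ leL b a

/-- Green's relation `R`. -/
def eqvR (a b : S) : Prop := leR a b ∧ leR b a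

/-- Green's relation `J`. -/
def eqvJ (a b : S) : Prop := leJ a b ∧ leJ b a

/-- Green's relation `H`. -/
def eqvH (a b : S) : Prop := leH a b ∧ leH b a

/-- `a <_L b`. -/
def ltL (a b : S) : Prop := leL a b ∧ ¬ leL b a

/-- `a <_R b`. -/
def ltR (a b : S) : Prop := leR a b ∧ ¬ leR b a

/-- `a <_J b`. -/
def ltJ (a b : S) : Prop := leJ a b ∧ ¬ leJ b a

/-- `a <_H b`. -/
def ltH (a b : S) : Prop := leH a b ∧ ¬ leH b a

end Defs

/-- The set of lengths of strictly decreasing chains with respect to a relation `lt`: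
`m` is a chain length if there is a sequence `c 0 >' c 1 >' … >' c (m-1)`. -/
def chainLengths {T : Type u} (lt : T → T → Prop) : Set ℕ :=
  {m | ∃ c : Fin m → T, ∀ i j : Fin m, i < j → lt (c j) (c i)}

/-- The height: the supremum, in `ℕ∞`, of the lengths of strictly decreasing chains. -/
noncomputable def heightOf {T : Type u} (lt : T → T → Prop) : ℕ∞ :=
  ⨆ m ∈ chainLengths lt, (m : ℕ∞)

/-- The `L`-height of a semigroup. -/
noncomputable def HL (S : Type u) [Semigroup S] : ℕ∞ := heightOf (ltL (S := S))

/-- The `R`-height of a semigroup. -/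
noncomputable def HR (S : Type u) [Semigroup S] : ℕ∞ := heightOf (ltR (S := S))

/-- The `J`-height of a semigroup. -/
noncomputable def HJ (S : Type u) [Semigroup S] : ℕ∞ := heightOf (ltJ (S := S))

/-- The `H`-height of a semigroup. -/
noncomputable def HH (S : Type u) [Semigroup S] : ℕ∞ := heightOf (ltH (S := S))

/-- `S` is left stable if `a ≤_L b` and `a J b` imply `a L b`. -/
def LeftStable (S : Type u) [Semigroup S] : Prop :=
  ∀ a b : S, leL a b → eqvJ a b → eqvL a b

/-- `S` is right stable if `a ≤_R b` and `a J b` imply `a R b`. -/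
def RightStable (S : Type u) [Semigroup S] : Prop :=
  ∀ a b : S, leR a b → eqvJ a b → eqvR a b

/-- `S` is stable if it is both left and right stable. -/
def Stable (S : Type u) [Semigroup S] : Prop := LeftStable S ∧ RightStable S



/-- The recursive multiplication on indices `1..q j` (level `j`). -/
def mulq (q : ℕ → ℕ) : ℕ → ℕ → ℕ → ℕ
  | 0, _, _ => 1
  | j+1, x, y =>
    if x ≤ q j then
      if y ≤ q j then mulq q j x y else y
    else
      if y ≤ q j then
        if x - (q (j+1) - q j) = 0 then y + (q (j+1) - q j)
        else mulq q j (x - (q (j+1) - q j)) y + (q (j+1) - q j)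
      else q (j+1)

def validq (q : ℕ → ℕ) (j x : ℕ) : Prop := 1 ≤ x ∧ x ≤ q j

lemma mulq_succ (q : ℕ → ℕ) (j x y : ℕ) :
    mulq q (j+1) x y =
      if x ≤ q j then
        if y ≤ q j then mulq q j x y else y
      else
        if y ≤ q j then
          if x - (q (j+1) - q j) = 0 then y + (q (j+1) - q j)
          else mulq q j (x - (q (j+1) - q j)) y + (q (j+1) - q j)
        else q (j+1) := rfl

lemma mulq_ll (q : ℕ → ℕ) {j x y : ℕ} (h1 : x ≤ q j) (h2 : y ≤ q j) :
    mulq q (j+1) x y = mulq q j x y := by rw [mulq_succ]; simp [h1, h2]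

lemma mulq_lu (q : ℕ → ℕ) {j x y : ℕ} (h1 : x ≤ q j) (h2 : ¬ y ≤ q j) :
    mulq q (j+1) x y = y := by rw [mulq_succ]; simp [h1, h2]

lemma mulq_ul (q : ℕ → ℕ) {j x y : ℕ} (h1 : ¬ x ≤ q j) (h2 : y ≤ q j) :
    mulq q (j+1) x y =
      if x - (q (j+1) - q j) = 0 then y + (q (j+1) - q j)
      else mulq q j (x - (q (j+1) - q j)) y + (q (j+1) - q j) := by
  rw [mulq_succ]; simp [h1, h2]

lemma mulq_uu (q : ℕ → ℕ) {j x y : ℕ} (h1 : ¬ x ≤ q j) (h2 : ¬ y ≤ q j) :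
    mulq q (j+1) x y = q (j+1) := by rw [mulq_succ]; simp [h1, h2]

section Levels

variable {q : ℕ → ℕ} (h0 : q 0 = 1) (hlt : ∀ i, q i < q (i+1)) (hle : ∀ i, q (i+1) ≤ 2 * q i + 1)

include h0 hlt in
lemma one_le_q : ∀ j, 1 ≤ q j := by
  intro j
  induction j with
  | zero => omega
  | succ j ih => have := hlt j; omega

include h0 hlt hle in
theorem mulq_bounds : ∀ j x y, validq q j x → validq q j y →
    validq q j (mulq q j x y) ∧ x ≤ mulq q j x y ∧ y ≤ mulq q j x y := by
  intro j
  induction j with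
  | zero =>
    intro x y vx vy
    rcases vx with ⟨vx1, vx2⟩; rcases vy with ⟨vy1, vy2⟩
    rw [h0] at vx2 vy2
    simp only [mulq]
    exact ⟨⟨le_rfl, by omega⟩, by omega, by omega⟩
  | succ j ih =>
    intro x y vx vy
    rcases vx with ⟨vx1, vx2⟩; rcases vy with ⟨vy1, vy2⟩
    have hq1 : 1 ≤ q j := one_le_q h0 hlt j
    have hqlt := hlt j
    have hqle := hle j
    by_cases hx : x ≤ q j
    · by_cases hy : y ≤ q j
      · rw [mulq_ll q hx hy]
        obtain ⟨⟨a1, a2⟩, b, c⟩ := ih x y ⟨vx1, hx⟩ ⟨vy1, hy⟩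
        exact ⟨⟨a1, by omega⟩, b, c⟩
      · rw [mulq_lu q hx hy]
        exact ⟨⟨vy1, vy2⟩, by omega, le_rfl⟩
    · by_cases hy : y ≤ q j
      · rw [mulq_ul q hx hy]
        by_cases hu : x - (q (j+1) - q j) = 0
        · rw [if_pos hu]
          exact ⟨⟨by omega, by omega⟩, by omega, by omega⟩
        · rw [if_neg hu]
          have hvu : validq q j (x - (q (j+1) - q j)) := ⟨by omega, by omega⟩
          obtain ⟨⟨a1, a2⟩, b, c⟩ := ih (x - (q (j+1) - q j)) y hvu ⟨vy1, hy⟩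
          exact ⟨⟨by omega, by omega⟩, by omega, by omega⟩
      · rw [mulq_uu q hx hy]
        exact ⟨⟨by omega, le_rfl⟩, vx2, vy2⟩

include h0 hlt hle in
lemma mulq_q_left {j x : ℕ} (vx : validq q j x) : mulq q j (q j) x = q j := by
  obtain ⟨⟨a1, a2⟩, b, c⟩ := mulq_bounds h0 hlt hle j (q j) x ⟨one_le_q h0 hlt j, le_rfl⟩ vx
  omega

include h0 hlt hle in
lemma mulq_q_right {j x : ℕ} (vx : validq q j x) : mulq q j x (q j) = q j := by
  obtain ⟨⟨a1, a2⟩, b, c⟩ := mulq_bounds h0 hlt hle j x (q j) vx ⟨one_le_q h0 hlt j, le_rfl⟩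
  omega

include h0 hlt hle in
lemma upper_mul_lower_upper {j s x : ℕ} (hs : ¬ s ≤ q j) (vs : validq q (j+1) s)
    (vx : validq q j x) : ¬ mulq q (j+1) s x ≤ q j := by
  have hq1 : 1 ≤ q j := one_le_q h0 hlt j
  have hqlt := hlt j
  have hqle := hle j
  rcases vs with ⟨vs1, vs2⟩
  rcases vx with ⟨vx1, vx2⟩
  rw [mulq_ul q hs vx2]
  by_cases hu : s - (q (j+1) - q j) = 0
  · rw [if_pos hu]
    omega
  · rw [if_neg hu]
    have hvu : validq q j (s - (q (j+1) - q j)) := ⟨by omega, by omega⟩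
    obtain ⟨⟨a1, a2⟩, b, c⟩ := mulq_bounds h0 hlt hle j (s - (q (j+1) - q j)) x hvu ⟨vx1, vx2⟩
    omega



include h0 hlt hle in
theorem mulq_assoc : ∀ j x y z, validq q j x → validq q j y → validq q j z →
    mulq q j (mulq q j x y) z = mulq q j x (mulq q j y z) := by
  intro j
  induction j with
  | zero => intro x y z _ _ _; simp [mulq]
  | succ j ih =>
    intro x y z vx vy vz
    have hq1 : 1 ≤ q j := one_le_q h0 hlt j
    have hqlt := hlt j
    have hqle := hle j
    rcases vx with ⟨vx1, vx2⟩
    rcases vy with ⟨vy1, vy2⟩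
    rcases vz with ⟨vz1, vz2⟩
    by_cases hx : x ≤ q j
    · by_cases hy : y ≤ q j
      · have hxy := mulq_bounds h0 hlt hle j x y ⟨vx1, hx⟩ ⟨vy1, hy⟩
        by_cases hz : z ≤ q j
        · -- LLL
          have hyz := mulq_bounds h0 hlt hle j y z ⟨vy1, hy⟩ ⟨vz1, hz⟩
          rw [mulq_ll q hx hy, mulq_ll q hxy.1.2 hz, mulq_ll q hy hz,
            mulq_ll q hx hyz.1.2, ih x y z ⟨vx1, hx⟩ ⟨vy1, hy⟩ ⟨vz1, hz⟩]
        · -- LLU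
          rw [mulq_ll q hx hy, mulq_lu q hxy.1.2 hz, mulq_lu q hy hz, mulq_lu q hx hz]
      · -- x lower, y upper
        rw [mulq_lu q hx hy]
        by_cases hz : z ≤ q j
        · -- LUL
          have hyzU : ¬ mulq q (j+1) y z ≤ q j :=
            upper_mul_lower_upper h0 hlt hle hy ⟨vy1, vy2⟩ ⟨vz1, hz⟩
          rw [mulq_lu q hx hyzU]
        · -- LUU
          rw [mulq_uu q hy hz]
          have : ¬ q (j+1) ≤ q j := by omega
          rw [mulq_lu q hx this]
    · by_cases hy : y ≤ q j
      · -- x upper, y lower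
        by_cases hz : z ≤ q j
        · -- ULL
          have hyz := mulq_bounds h0 hlt hle j y z ⟨vy1, hy⟩ ⟨vz1, hz⟩
          rw [mulq_ul q hx hy, mulq_ll q hy hz, mulq_ul q hx hyz.1.2]
          by_cases hu : x - (q (j+1) - q j) = 0
          · rw [if_pos hu, if_pos hu]
            have hyk : ¬ y + (q (j+1) - q j) ≤ q j := by omega
            rw [mulq_ul q hyk hz, if_neg (by omega : ¬ (y + (q (j+1) - q j)) - (q (j+1) - q j) = 0)]
            have : y + (q (j+1) - q j) - (q (j+1) - q j) = y := by omega
            rw [this]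
          · rw [if_neg hu, if_neg hu]
            have huv : validq q j (x - (q (j+1) - q j)) := ⟨by omega, by omega⟩
            have huy := mulq_bounds h0 hlt hle j (x - (q (j+1) - q j)) y huv ⟨vy1, hy⟩
            have hupk : ¬ mulq q j (x - (q (j+1) - q j)) y + (q (j+1) - q j) ≤ q j := by
              have := huy.1.1; omega
            rw [mulq_ul q hupk hz]
            have h2 : mulq q j (x - (q (j+1) - q j)) y + (q (j+1) - q j) - (q (j+1) - q j)
                = mulq q j (x - (q (j+1) - q j)) y := by omega
            rw [if_neg (by have := huy.1.1; omega), h2,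
              ih (x - (q (j+1) - q j)) y z huv ⟨vy1, hy⟩ ⟨vz1, hz⟩]
        · -- ULU
          have hxyU : ¬ mulq q (j+1) x y ≤ q j :=
            upper_mul_lower_upper h0 hlt hle hx ⟨vx1, vx2⟩ ⟨vy1, hy⟩
          rw [mulq_uu q hxyU hz, mulq_lu q hy hz, mulq_uu q hx hz]
      · -- x upper, y upper
        rw [mulq_uu q hx hy]
        have hQ : ¬ q (j+1) ≤ q j := by omega
        by_cases hz : z ≤ q j
        · -- UUL
          rw [mulq_ul q hQ hz]
          have h1 : q (j+1) - (q (j+1) - q j) = q j := by omega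
          rw [if_neg (by omega), h1, mulq_q_left h0 hlt hle ⟨vz1, hz⟩]
          have hyzU : ¬ mulq q (j+1) y z ≤ q j :=
            upper_mul_lower_upper h0 hlt hle hy ⟨vy1, vy2⟩ ⟨vz1, hz⟩
          rw [mulq_uu q hx hyzU]
          omega
        · -- UUU
          rw [mulq_uu q hQ hz, mulq_uu q hy hz, mulq_uu q hx hQ]

include h0 hlt hle in
theorem mulq_reach : ∀ j x w, validq q j x → validq q j w → x < w →
    ∃ s, validq q j s ∧ mulq q j x s = w := by
  intro j
  induction j with
  | zero =>
    intro x w vx vw hxw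
    exfalso
    rcases vx with ⟨a, b⟩; rcases vw with ⟨c, d⟩; rw [h0] at b d; omega
  | succ j ih =>
    intro x w vx vw hxw
    have hq1 : 1 ≤ q j := one_le_q h0 hlt j
    have hqlt := hlt j
    have hqle := hle j
    rcases vx with ⟨vx1, vx2⟩
    rcases vw with ⟨vw1, vw2⟩
    by_cases hx : x ≤ q j
    · by_cases hw : w ≤ q j
      · obtain ⟨s, ⟨vs1, vs2⟩, hs⟩ := ih x w ⟨vx1, hx⟩ ⟨vw1, hw⟩ hxw
        exact ⟨s, ⟨vs1, by omega⟩, by rw [mulq_ll q hx vs2, hs]⟩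
      · exact ⟨w, ⟨vw1, vw2⟩, by rw [mulq_lu q hx hw]⟩
    · have hw : ¬ w ≤ q j := by omega
      by_cases hu : x - (q (j+1) - q j) = 0
      · refine ⟨w - (q (j+1) - q j), ⟨by omega, by omega⟩, ?_⟩
        rw [mulq_ul q hx (by omega : w - (q (j+1) - q j) ≤ q j), if_pos hu]
        omega
      · have huv : validq q j (x - (q (j+1) - q j)) := ⟨by omega, by omega⟩
        have hwv : validq q j (w - (q (j+1) - q j)) := ⟨by omega, by omega⟩
        obtain ⟨s, ⟨vs1, vs2⟩, hs⟩ := ih (x - (q (j+1) - q j)) (w - (q (j+1) - q j)) huv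
          hwv (by rcases huv with ⟨a,b⟩; rcases hwv with ⟨c,d⟩; omega)
        refine ⟨s, ⟨vs1, by omega⟩, ?_⟩
        rw [mulq_ul q hx vs2, if_neg hu, hs]
        omega

def leLn (q : ℕ → ℕ) (j w x : ℕ) : Prop :=
  w = x ∨ ∃ s, validq q j s ∧ mulq q j s x = w

include h0 hlt hle in
lemma leLn_ge {j x w : ℕ} (vx : validq q j x) (h : leLn q j w x) :
    x ≤ w ∧ validq q j w := by
  rcases h with rfl | ⟨s, vs, rfl⟩
  · exact ⟨le_rfl, vx⟩
  · obtain ⟨hv, _, hc⟩ := mulq_bounds h0 hlt hle j s x vs vx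
    exact ⟨hc, hv⟩

include hlt in
lemma leLn_up {j x w : ℕ} (hx : x ≤ q j) (h : leLn q j w x) : leLn q (j+1) w x := by
  rcases h with rfl | ⟨s, vs, rfl⟩
  · exact Or.inl rfl
  · exact Or.inr ⟨s, ⟨vs.1, vs.2.trans (le_of_lt (hlt j))⟩, by rw [mulq_ll q vs.2 hx]⟩

include h0 hlt hle in
lemma leLn_down {j x w : ℕ} (hw : w ≤ q j) (hx : validq q j x) (h : leLn q (j+1) w x) :
    leLn q j w x := by
  rcases h with rfl | ⟨s, vs, hs⟩
  · exact Or.inl rfl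
  · by_cases hsl : s ≤ q j
    · exact Or.inr ⟨s, ⟨vs.1, hsl⟩, by rw [← mulq_ll q hsl hx.2, hs]⟩
    · exfalso
      have h2 := upper_mul_lower_upper h0 hlt hle hsl vs hx
      rw [hs] at h2
      exact h2 hw

include h0 hlt hle in
lemma upper_downset {j x w : ℕ} (hx : ¬ x ≤ q j) (vx : validq q (j+1) x)
    (h : leLn q (j+1) w x) : w = x ∨ w = q (j+1) := by
  rcases h with rfl | ⟨s, vs, hs⟩
  · exact Or.inl rfl
  · by_cases hsl : s ≤ q j
    · rw [mulq_lu q hsl hx] at hs; exact Or.inl hs.symm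
    · rw [mulq_uu q hsl hx] at hs; exact Or.inr hs.symm

include h0 hlt hle in
lemma left_mult_at_zero {j s : ℕ} (vs : validq q (j+1) s) :
    mulq q (j+1) s (q j) = q (j+1) ∨ mulq q (j+1) s (q j) = q j := by
  have hq1 : 1 ≤ q j := one_le_q h0 hlt j
  have hqlt := hlt j
  have hqle := hle j
  by_cases hsl : s ≤ q j
  · right
    rw [mulq_ll q hsl le_rfl]
    exact mulq_q_right h0 hlt hle ⟨vs.1, hsl⟩
  · left
    rw [mulq_ul q hsl le_rfl]
    by_cases hu : s - (q (j+1) - q j) = 0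
    · rw [if_pos hu]; omega
    · rw [if_neg hu, mulq_q_right h0 hlt hle ⟨by omega, by rcases vs with ⟨a,b⟩; omega⟩]
      omega

/-- Chains for the `L`-order, with `ℕ`-indexing. -/
def IsChainL (q : ℕ → ℕ) (j L : ℕ) (c : ℕ → ℕ) : Prop :=
  (∀ i, i < L → validq q j (c i)) ∧
    ∀ i i', i < i' → i' < L → leLn q j (c i') (c i) ∧ ¬ leLn q j (c i) (c i')

include h0 hlt hle in
lemma chain_strictmono {j L : ℕ} {c : ℕ → ℕ} (h : IsChainL q j L c) :
    ∀ i i', i < i' → i' < L → c i < c i' := by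
  intro i i' hii hL
  obtain ⟨hle1, hv⟩ := leLn_ge h0 hlt hle (h.1 i (by omega)) ((h.2 i i' hii hL).1)
  rcases lt_or_eq_of_le hle1 with h1 | h1
  · exact h1
  · exact absurd (Or.inl h1 : leLn q j (c i) (c i')) ((h.2 i i' hii hL).2)

include h0 hlt hle in
theorem chainL_exists : ∀ j, ∃ c : ℕ → ℕ, IsChainL q j (j+1) c := by
  intro j
  induction j with
  | zero =>
    refine ⟨fun _ => 1, fun i _ => ⟨le_rfl, by show (1:ℕ) ≤ q 0; omega⟩,
      fun i i' h1 h2 => absurd h2 (by omega)⟩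
  | succ j ih =>
    obtain ⟨c, hc⟩ := ih
    have hq1 : 1 ≤ q j := one_le_q h0 hlt j
    have hqlt := hlt j
    refine ⟨fun i => if i < j + 1 then c i else q (j+1), ?_, ?_⟩
    · intro i hi
      by_cases h : i < j + 1
      · simp only [if_pos h]
        exact ⟨(hc.1 i h).1, (hc.1 i h).2.trans (le_of_lt hqlt)⟩
      · simp only [if_neg h]
        exact ⟨by omega, le_rfl⟩
    · intro i i' hii hi'
      by_cases h2 : i' < j + 1
      · have h1 : i < j + 1 := by omega
        simp only [if_pos h1, if_pos h2]
        constructor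
        · exact leLn_up hlt (hc.1 i h1).2 (hc.2 i i' hii h2).1
        · intro hcon
          exact (hc.2 i i' hii h2).2
            (leLn_down h0 hlt hle (hc.1 i h1).2 (hc.1 i' h2) hcon)
      · have hi'v : i' = j + 1 := by omega
        by_cases h1 : i < j + 1
        · simp only [if_pos h1, if_neg h2]
          obtain ⟨hcv1, hcv2⟩ := hc.1 i h1
          have hcv : validq q j (c i) := ⟨hcv1, hcv2⟩
          constructor
          · refine Or.inr ⟨q (j+1), ⟨by omega, le_rfl⟩, ?_⟩
            rw [mulq_ul q (by omega) hcv.2, if_neg (by omega)]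
            have hqq : q (j+1) - (q (j+1) - q j) = q j := by omega
            rw [hqq, mulq_q_left h0 hlt hle hcv]
            omega
          · rintro (heq | ⟨s, vs, hs⟩)
            · omega
            · by_cases hsl : s ≤ q j
              · rw [mulq_lu q hsl (by omega)] at hs
                omega
              · rw [mulq_uu q hsl (by omega)] at hs
                omega
        · omega

include h0 hlt hle in
theorem chainL_bound : ∀ j L (c : ℕ → ℕ), IsChainL q j L c →
    L ≤ j + 1 ∧ (1 ≤ L → c (L-1) ≠ q j → L ≤ j) := by
  intro j
  induction j with
  | zero =>
    intro L c hc
    have hall : ∀ i, i < L → c i = 1 := by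
      intro i hi
      have := hc.1 i hi
      rcases this with ⟨a, b⟩
      rw [h0] at b
      omega
    constructor
    · by_contra hcon
      have h01 : (0:ℕ) < 1 := by omega
      have := (hc.2 0 1 h01 (by omega)).2
      exact this (Or.inl (by rw [hall 0 (by omega), hall 1 (by omega)]))
    · intro hL hne
      exact absurd (by rw [hall (L-1) (by omega), h0]) hne
  | succ j ih =>
    intro L c hc
    have hq1 : 1 ≤ q j := one_le_q h0 hlt j
    have hqlt := hlt j
    by_cases hL0 : L = 0
    · exact ⟨by omega, by omega⟩
    by_cases hall : ∀ i, i < L → c i ≤ q j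
    · -- all lower: restrict to level j
      have hcj : IsChainL q j L c := by
        refine ⟨fun i hi => ⟨(hc.1 i hi).1, hall i hi⟩, fun i i' hii hi' => ?_⟩
        constructor
        · exact leLn_down h0 hlt hle (hall i' hi') ⟨(hc.1 i (by omega)).1, hall i (by omega)⟩
            (hc.2 i i' hii hi').1
        · intro hcon
          exact (hc.2 i i' hii hi').2 (leLn_up hlt (hall i' hi') hcon)
      obtain ⟨b1, _⟩ := ih L c hcj
      refine ⟨by omega, fun hL hne => by omega⟩
    · -- there is an upper element
      push_neg at hall
      obtain ⟨p0, hp0L, hp0⟩ := hall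
      -- minimal upper index
      have hex : ∃ p, p < L ∧ ¬ c p ≤ q j := ⟨p0, hp0L, by omega⟩
      classical
      obtain ⟨p, hpL, hpU, hmin⟩ :
          ∃ p, p < L ∧ ¬ c p ≤ q j ∧ ∀ i, i < p → c i ≤ q j := by
        refine ⟨Nat.find hex, (Nat.find_spec hex).1, (Nat.find_spec hex).2, fun i hi => ?_⟩
        by_contra hcon
        have hiL : i < L := by have := (Nat.find_spec hex).1; omega
        have hle2 : Nat.find hex ≤ i := Nat.find_le ⟨hiL, hcon⟩
        omega
      have hmono := chain_strictmono h0 hlt hle hc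
      -- all indices ≥ p are upper
      have hupper : ∀ i, p ≤ i → i < L → ¬ c i ≤ q j := by
        intro i hpi hiL
        rcases eq_or_lt_of_le hpi with rfl | hlt2
        · exact hpU
        · have := hmono p i hlt2 hiL
          omega
      -- second upper element must be q (j+1)
      have hsecond : ∀ i, p < i → i < L → c i = q (j+1) := by
        intro i hpi hiL
        have h1 := (hc.2 p i hpi hiL).1
        have hdown := upper_downset h0 hlt hle hpU (hc.1 p hpL) h1
        rcases hdown with heq | heq
        · exact absurd heq (by have := hmono p i hpi hiL; omega)
        · exact heq
      -- at most two upper elements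
      have hL2 : L ≤ p + 2 := by
        by_contra hcon
        have e1 := hsecond (p+1) (by omega) (by omega)
        have e2 := hsecond (p+2) (by omega) (by omega)
        have := hmono (p+1) (p+2) (by omega) (by omega)
        omega
      -- prefix of lower elements is a chain at level j
      have hpre : IsChainL q j p c := by
        refine ⟨fun i hi => ⟨(hc.1 i (by omega)).1, hmin i hi⟩, fun i i' hii hi' => ?_⟩
        constructor
        · exact leLn_down h0 hlt hle (hmin i' hi') ⟨(hc.1 i (by omega)).1, hmin i (by omega)⟩
            (hc.2 i i' hii (by omega)).1
        · intro hcon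
          exact (hc.2 i i' hii (by omega)).2 (leLn_up hlt (hmin i' hi') hcon)
      obtain ⟨hb1, hb2⟩ := ih p c hpre
      -- transition: if c p ≠ q (j+1) and p ≥ 1 then c (p-1) ≠ q j
      have htrans : c p ≠ q (j+1) → 1 ≤ p → c (p-1) ≠ q j := by
        intro hne hp1 heq
        have h1 := (hc.2 (p-1) p (by omega) hpL).1
        rw [heq] at h1
        rcases h1 with h1 | ⟨s, vs, hs⟩
        · exact hpU (by omega)
        · rcases left_mult_at_zero h0 hlt hle (j := j) (s := s) vs with h2 | h2
          · rw [hs] at h2; exact hne h2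
          · rw [hs] at h2; exact hpU (by omega)
      constructor
      · -- L ≤ j + 2
        rcases Nat.lt_or_ge L (p+2) with hcase | hcase
        · omega
        · -- L = p + 2
          have hLp : L = p + 2 := by omega
          have hcp : c p ≠ q (j+1) := by
            have e1 := hsecond (p+1) (by omega) (by omega)
            have e2 := hmono p (p+1) (by omega) (by omega)
            omega
          by_cases hp1 : 1 ≤ p
          · have := hb2 hp1 (htrans hcp hp1)
            omega
          · omega
      · -- bottom ≠ q (j+1) → L ≤ j+1
        intro hL1 hbot
        have hLp1 : L ≤ p + 1 := by
          by_contra hcon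
          have hLp : L = p + 2 := by omega
          have h2 := hsecond (p+1) (by omega) (by omega)
          exact hbot (by rw [show L - 1 = p + 1 by omega]; exact h2)
        have hLeq : L = p + 1 := by omega
        have hcp : c p ≠ q (j+1) := by
          rw [show p = L - 1 by omega]
          exact hbot
        by_cases hp1 : 1 ≤ p
        · have := hb2 hp1 (htrans hcp hp1)
          omega
        · omega

end Levels

/-- Downward level-size sequence: `gseq n m 0 = m` and each step roughly halves. -/
def gseq (n m : ℕ) : ℕ → ℕ
  | 0 => m
  | k+1 => max (n - 1 - k) (gseq n m k / 2)

/-- `qseq n m i` is the size of the level-`i` semigroup; `qseq n m 0 = 1`,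
`qseq n m (n-1) = m`. -/
def qseq (n m : ℕ) (i : ℕ) : ℕ :=
  if i + 1 ≤ n then gseq n m (n - 1 - i) else m + (i + 1 - n)

section Seq

variable {n m : ℕ} (hn : 1 ≤ n) (hnm : n ≤ m) (hm : m ≤ 2 ^ n - 1)

include hn hnm hm in
lemma gseq_bounds : ∀ k, k ≤ n - 1 → (n - k ≤ gseq n m k ∧ gseq n m k ≤ 2 ^ (n - k) - 1) := by
  intro k
  induction k with
  | zero => intro _; simpa [gseq] using ⟨hnm, hm⟩
  | succ k ih =>
    intro hk
    obtain ⟨ih1, ih2⟩ := ih (by omega)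
    have h2p : 1 ≤ 2 ^ (n - (k+1)) := Nat.one_le_two_pow
    have hexp : 2 ^ (n - k) = 2 * 2 ^ (n - (k+1)) := by
      rw [← pow_succ']
      congr 1
      omega
    constructor
    · have : n - (k+1) = n - 1 - k := by omega
      calc n - (k+1) = n - 1 - k := by omega
        _ ≤ max (n - 1 - k) (gseq n m k / 2) := le_max_left _ _
        _ = gseq n m (k+1) := rfl
    · show max (n - 1 - k) (gseq n m k / 2) ≤ 2 ^ (n - (k+1)) - 1
      apply max_le
      · have h1 : n - 1 - k ≤ n - (k+1) := by omega
        have h2 : n - (k+1) < 2 ^ (n - (k+1)) := Nat.lt_two_pow_self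
        omega
      · have : gseq n m k / 2 ≤ (2 ^ (n - k) - 1) / 2 := Nat.div_le_div_right ih2
        have h3 : (2 ^ (n - k) - 1) / 2 = 2 ^ (n - (k+1)) - 1 := by
          omega
        omega

include hn hnm hm in
lemma gseq_step : ∀ k, k + 1 ≤ n - 1 →
    gseq n m (k+1) < gseq n m k ∧ gseq n m k ≤ 2 * gseq n m (k+1) + 1 := by
  intro k hk
  obtain ⟨b1, b2⟩ := gseq_bounds hn hnm hm k (by omega)
  have hdiv : gseq n m k ≤ 2 * (gseq n m k / 2) + 1 := by omega
  have hgk : 1 ≤ gseq n m k := by omega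
  constructor
  · show max (n - 1 - k) (gseq n m k / 2) < gseq n m k
    apply max_lt
    · omega
    · omega
  · calc gseq n m k ≤ 2 * (gseq n m k / 2) + 1 := hdiv
      _ ≤ 2 * max (n - 1 - k) (gseq n m k / 2) + 1 := by
          have := le_max_right (n - 1 - k) (gseq n m k / 2); omega
      _ = 2 * gseq n m (k+1) + 1 := rfl

include hn hnm hm in
lemma qseq_zero : qseq n m 0 = 1 := by
  have h := gseq_bounds hn hnm hm (n - 1) (le_rfl)
  have h1 : n - (n - 1) = 1 := by omega
  rw [h1] at h
  simp only [qseq, if_pos (by omega : 0 + 1 ≤ n), Nat.sub_zero]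
  omega

include hn in
lemma qseq_top : qseq n m (n - 1) = m := by
  simp only [qseq, if_pos (by omega : n - 1 + 1 ≤ n)]
  have : n - 1 - (n - 1) = 0 := by omega
  rw [this]
  rfl

include hn hnm hm in
lemma qseq_lt : ∀ i, qseq n m i < qseq n m (i+1) := by
  intro i
  have hm1 : 1 ≤ m := by omega
  by_cases h1 : i + 2 ≤ n
  · have e1 : qseq n m i = gseq n m (n - 1 - i) := by
      simp only [qseq, if_pos (by omega : i + 1 ≤ n)]
    have e2 : qseq n m (i+1) = gseq n m (n - 1 - (i+1)) := by
      simp only [qseq, if_pos (by omega : i + 1 + 1 ≤ n)]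
    have hk : (n - 1 - (i+1)) + 1 = n - 1 - i := by omega
    have := (gseq_step hn hnm hm (n - 1 - (i+1)) (by omega)).1
    rw [hk] at this
    omega
  · by_cases h2 : i + 1 ≤ n
    · have hieq : i = n - 1 := by omega
      have e1 : qseq n m i = m := by rw [hieq]; exact qseq_top hn
      have e2 : qseq n m (i+1) = m + 1 := by
        simp only [qseq, if_neg (by omega : ¬ i + 1 + 1 ≤ n)]
        omega
      omega
    · have e1 : qseq n m i = m + (i + 1 - n) := by simp only [qseq, if_neg h2]
      have e2 : qseq n m (i+1) = m + (i + 2 - n) := by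
        simp only [qseq, if_neg (by omega : ¬ i + 1 + 1 ≤ n)]
        try omega
      omega

include hn hnm hm in
lemma qseq_le : ∀ i, qseq n m (i+1) ≤ 2 * qseq n m i + 1 := by
  intro i
  have hm1 : 1 ≤ m := by omega
  by_cases h1 : i + 2 ≤ n
  · have e1 : qseq n m i = gseq n m (n - 1 - i) := by
      simp only [qseq, if_pos (by omega : i + 1 ≤ n)]
    have e2 : qseq n m (i+1) = gseq n m (n - 1 - (i+1)) := by
      simp only [qseq, if_pos (by omega : i + 1 + 1 ≤ n)]
    have hk : (n - 1 - (i+1)) + 1 = n - 1 - i := by omega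
    have := (gseq_step hn hnm hm (n - 1 - (i+1)) (by omega)).2
    rw [hk] at this
    omega
  · by_cases h2 : i + 1 ≤ n
    · have hieq : i = n - 1 := by omega
      have e1 : qseq n m i = m := by rw [hieq]; exact qseq_top hn
      have e2 : qseq n m (i+1) = m + 1 := by
        simp only [qseq, if_neg (by omega : ¬ i + 1 + 1 ≤ n)]
        omega
      omega
    · have e1 : qseq n m i = m + (i + 1 - n) := by simp only [qseq, if_neg h2]
      have e2 : qseq n m (i+1) = m + (i + 2 - n) := by
        simp only [qseq, if_neg (by omega : ¬ i + 1 + 1 ≤ n)]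
        try omega
      omega

end Seq

lemma heightOf_eq {T : Type u} (lt : T → T → Prop) (k : ℕ)
    (h1 : k ∈ chainLengths lt) (h2 : ∀ l ∈ chainLengths lt, l ≤ k) :
    heightOf lt = (k : ℕ∞) := by
  apply le_antisymm
  · refine iSup₂_le fun l hl => ?_
    exact_mod_cast h2 l hl
  · exact le_iSup₂_of_le k h1 le_rfl

lemma fin_chain_le {m L : ℕ} (v : Fin L → ℕ) (hmono : ∀ i j : Fin L, i < j → v i < v j)
    (hbound : ∀ i, 1 ≤ v i ∧ v i ≤ m) : L ≤ m := by
  have key : ∀ k, ∀ h : k < L, k + 1 ≤ v ⟨k, h⟩ := by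
    intro k
    induction k with
    | zero => intro h; exact (hbound ⟨0, h⟩).1
    | succ k ihk =>
      intro h
      have hk : k < L := by omega
      have h1 := ihk hk
      have h2 := hmono ⟨k, hk⟩ ⟨k+1, h⟩ (by simp [Fin.lt_def])
      omega
  cases L with
  | zero => omega
  | succ K =>
    have h1 := key K (by omega)
    have h2 := (hbound ⟨K, by omega⟩).2
    omega

theorem exists_semigroup_with_heights' (n m : ℕ) (hn : 1 ≤ n) (hnm : n ≤ m)
    (hm : m ≤ 2 ^ n - 1) :
    ∃ (S : Type) (_ : Semigroup S) (_ : Fintype S),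
      Fintype.card S = m ∧ HL S = (n : ℕ∞) ∧ HR S = (m : ℕ∞) ∧ HJ S = (m : ℕ∞) ∧
      ∀ a b : S, eqvJ a b → a = b := by
  classical
  have h0 : qseq n m 0 = 1 := qseq_zero hn hnm hm
  have hlt : ∀ i, qseq n m i < qseq n m (i+1) := qseq_lt hn hnm hm
  have hle2 : ∀ i, qseq n m (i+1) ≤ 2 * qseq n m i + 1 := qseq_le hn hnm hm
  have htop : qseq n m (n-1) = m := qseq_top hn
  set q : ℕ → ℕ := qseq n m with hq
  set N : ℕ := n - 1 with hNdef
  have hN1 : N + 1 = n := by omega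
  have hm1 : 1 ≤ m := by omega
  -- the carrier
  let SG : Type := {x : ℕ // x ∈ Finset.Icc 1 m}
  letI instFin : Fintype SG := FinsetCoe.fintype (Finset.Icc 1 m)
  have vmem : ∀ a : SG, validq q N a.1 := by
    intro a
    have := a.2
    rw [Finset.mem_Icc] at this
    exact ⟨this.1, by rw [htop]; exact this.2⟩
  have memv : ∀ x : ℕ, validq q N x → x ∈ Finset.Icc 1 m := by
    intro x hx
    rw [Finset.mem_Icc]
    exact ⟨hx.1, by rw [← htop]; exact hx.2⟩
  letI instSG : Semigroup SG :=
    { mul := fun a b => ⟨mulq q N a.1 b.1,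
        memv _ (mulq_bounds h0 hlt hle2 N a.1 b.1 (vmem a) (vmem b)).1⟩
      mul_assoc := fun a b c =>
        Subtype.ext (mulq_assoc h0 hlt hle2 N a.1 b.1 c.1 (vmem a) (vmem b) (vmem c)) }
  have hmulval : ∀ a b : SG, (a * b).1 = mulq q N a.1 b.1 := fun _ _ => rfl
  -- translation lemmas
  have hleL : ∀ a b : SG, leL a b ↔ leLn q N a.1 b.1 := by
    intro a b
    constructor
    · rintro (rfl | ⟨s, rfl⟩)
      · exact Or.inl rfl
      · exact Or.inr ⟨s.1, vmem s, rfl⟩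
    · rintro (h | ⟨s, vs, hs⟩)
      · exact Or.inl (Subtype.ext h)
      · exact Or.inr ⟨⟨s, memv s vs⟩, Subtype.ext hs.symm⟩
  have hleR : ∀ a b : SG, leR a b ↔ b.1 ≤ a.1 := by
    intro a b
    constructor
    · rintro (rfl | ⟨s, rfl⟩)
      · exact le_rfl
      · exact (mulq_bounds h0 hlt hle2 N b.1 s.1 (vmem b) (vmem s)).2.1
    · intro h
      rcases eq_or_lt_of_le h with h1 | h1
      · exact Or.inl (Subtype.ext h1.symm)
      · obtain ⟨s, vs, hs⟩ := mulq_reach h0 hlt hle2 N b.1 a.1 (vmem b) (vmem a) h1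
        exact Or.inr ⟨⟨s, memv s vs⟩, Subtype.ext hs.symm⟩
  have hleJge : ∀ a b : SG, leJ a b → b.1 ≤ a.1 := by
    intro a b h
    rcases h with rfl | ⟨s, rfl⟩ | ⟨t, rfl⟩ | ⟨s, t, rfl⟩
    · exact le_rfl
    · exact (mulq_bounds h0 hlt hle2 N s.1 b.1 (vmem s) (vmem b)).2.2
    · exact (mulq_bounds h0 hlt hle2 N b.1 t.1 (vmem b) (vmem t)).2.1
    · calc b.1 ≤ (s * b).1 :=
            (mulq_bounds h0 hlt hle2 N s.1 b.1 (vmem s) (vmem b)).2.2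
        _ ≤ (s * b * t).1 :=
            (mulq_bounds h0 hlt hle2 N (s*b).1 t.1 (vmem (s*b)) (vmem t)).2.1
  have hJtriv : ∀ a b : SG, eqvJ a b → a = b := by
    intro a b h
    exact Subtype.ext (le_antisymm (hleJge b a h.2) (hleJge a b h.1))
  have hltR : ∀ a b : SG, ltR a b ↔ b.1 < a.1 := by
    intro a b
    unfold ltR
    rw [hleR a b, hleR b a]
    omega
  have hltJ : ∀ a b : SG, ltJ a b ↔ b.1 < a.1 := by
    intro a b
    constructor
    · rintro ⟨h1, h2⟩
      have hge := hleJge a b h1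
      rcases eq_or_lt_of_le hge with h3 | h3
      · exact absurd (Or.inl (Subtype.ext h3) : leJ b a) h2
      · exact h3
    · intro h
      constructor
      · rcases (hleR a b).2 (le_of_lt h) with h1 | ⟨s, hs⟩
        · exact Or.inl h1
        · exact Or.inr (Or.inr (Or.inl ⟨s, hs⟩))
      · intro hcon
        have := hleJge b a hcon
        omega
  -- the decreasing chain 1, 2, ..., m realizes R- and J-height m
  have hchainval : ∀ (lt' : SG → SG → Prop), (∀ a b : SG, lt' a b ↔ b.1 < a.1) →
      m ∈ chainLengths lt' ∧ ∀ L ∈ chainLengths lt', L ≤ m := by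
    intro lt' hiff
    constructor
    · refine ⟨fun i => ⟨(i : ℕ) + 1, Finset.mem_Icc.mpr ⟨by omega, by have := i.2; omega⟩⟩,
        fun i j hij => ?_⟩
      rw [hiff]
      simpa using (by exact_mod_cast hij : (i:ℕ) < (j:ℕ))
    · rintro L ⟨c, hc⟩
      refine fin_chain_le (fun i => (c i).1) (fun i j hij => ?_) (fun i => ?_)
      · exact (hiff (c j) (c i)).1 (hc i j hij)
      · obtain ⟨hv1, hv2⟩ := vmem (c i)
        rw [htop] at hv2
        exact ⟨hv1, hv2⟩
  obtain ⟨hRmem, hRbound⟩ := hchainval (ltR) hltR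
  obtain ⟨hJmem, hJbound⟩ := hchainval (ltJ) hltJ
  -- L-height
  have hHL : HL SG = (n : ℕ∞) := by
    apply heightOf_eq
    · obtain ⟨c, hchain⟩ := chainL_exists h0 hlt hle2 N
      refine ⟨fun i : Fin n => ⟨c i, memv _ (hchain.1 i (by have := i.2; omega))⟩,
        fun i j hij => ?_⟩
      have hij' : (i : ℕ) < (j : ℕ) := by exact_mod_cast hij
      have hjN : (j : ℕ) < N + 1 := by rw [hN1]; exact j.2
      obtain ⟨ha, hb⟩ := hchain.2 i j hij' hjN
      constructor
      · rw [hleL]; exact ha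
      · rw [hleL]; exact hb
    · rintro L ⟨c, hc⟩
      have : IsChainL q N L (fun i => if h : i < L then (c ⟨i, h⟩).1 else 1) := by
        constructor
        · intro i hi
          simp only [dif_pos hi]
          exact vmem _
        · intro i i' hii hi'
          simp only [dif_pos hi', dif_pos (by omega : i < L)]
          obtain ⟨ha, hb⟩ := hc ⟨i, by omega⟩ ⟨i', hi'⟩ (by simp [Fin.lt_def]; omega)
          exact ⟨(hleL _ _).1 ha, fun hcon => hb ((hleL _ _).2 hcon)⟩
      have := (chainL_bound h0 hlt hle2 N L _ this).1
      omega
  have hHR : HR SG = (m : ℕ∞) := heightOf_eq _ m hRmem hRbound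
  have hHJ : HJ SG = (m : ℕ∞) := heightOf_eq _ m hJmem hJbound
  have hcard : Fintype.card SG = m := by
    have h1 : Fintype.card SG = (Finset.Icc 1 m).card := Fintype.card_coe _
    rw [h1, Nat.card_Icc]
    omega
  exact ⟨SG, instSG, instFin, hcard, hHL, hHR, hHJ, hJtriv⟩


/-- For every `n ≥ 1` and every `m` with `n ≤ m ≤ 2ⁿ - 1` there is a
finite semigroup `S` of cardinality `m` with `H_L(S) = n` and `H_R(S) = H_J(S) = m`
(so in particular `S` is `J`-trivial). -/
theorem exists_semigroup_with_heights (n m : ℕ) (hn : 1 ≤ n) (hnm : n ≤ m)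
    (hm : m ≤ 2 ^ n - 1) :
    ∃ (S : Type) (_ : Semigroup S) (_ : Fintype S),
      Fintype.card S = m ∧ HL S = (n : ℕ∞) ∧ HR S = (m : ℕ∞) ∧ HJ S = (m : ℕ∞) ∧
      ∀ a b : S, eqvJ a b → a = b := by
  exact exists_semigroup_with_heights' n m hn hnm hm

end GreenHeights
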